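/- Let r ≥ 4 and let U ⊆ [r] with |U| < r − 2. Define V ∈ ℝ^(𝒫([r])) by V_T = (−1)^(|T|) if U ⊆ T and V_T = 0 otherwise. Then M_r V = 0, i.e., V lies in the kernel of M_r. -/

import Mathlib

/-- The matrix `M_r`, indexed by subsets `S, T ⊆ [r]`, with entry
`C(|S ∩ T|, 2) + C(|Sᶜ ∩ Tᶜ|, 2)`. -/
def Mmat (r : ℕ) : Matrix (Finset (Fin r)) (Finset (Fin r)) ℝ :=
  fun S T => ((S ∩ T).card.choose 2 : ℝ) + ((Sᶜ ∩ Tᶜ).card.choose 2 : ℝ)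

open Finset in
lemma interval_sum_zero {α : Type*} [Fintype α] [DecidableEq α] (U A : Finset α)
    (h : U.card < A.card) :
    ∑ T ∈ Finset.univ.filter (fun T => U ⊆ T ∧ T ⊆ A), (-1 : ℝ) ^ T.card = 0 := by
  by_cases hUA : U ⊆ A
  · have hne : (A \ U).Nonempty := by
      rw [← Finset.card_pos, Finset.card_sdiff_of_subset hUA]
      omega
    have key : ∑ W ∈ (A \ U).powerset, (-1 : ℝ) ^ W.card = 0 := by
      have := Finset.sum_powerset_neg_one_pow_card_of_nonempty (x := A \ U) hne
      exact_mod_cast congrArg (Int.cast : ℤ → ℝ) this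
    rw [show (0:ℝ) = (-1:ℝ)^U.card * ∑ W ∈ (A \ U).powerset, (-1:ℝ)^W.card by
      rw [key, mul_zero], Finset.mul_sum]
    refine Finset.sum_nbij' (fun T => T \ U) (fun W => U ∪ W) ?_ ?_ ?_ ?_ ?_
    · intro T hT
      simp only [Finset.mem_filter, Finset.mem_powerset] at hT ⊢
      exact Finset.sdiff_subset_sdiff hT.2.2 le_rfl
    · intro W hW
      simp only [Finset.mem_powerset] at hW
      simp only [Finset.mem_filter, Finset.mem_univ, true_and]
      exact ⟨Finset.subset_union_left, Finset.union_subset hUA (hW.trans Finset.sdiff_subset)⟩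
    · intro T hT
      simp only [Finset.mem_filter] at hT
      exact Finset.union_sdiff_of_subset hT.2.1
    · intro W hW
      simp only [Finset.mem_powerset] at hW
      have hd : Disjoint U W := Finset.disjoint_of_subset_right hW Finset.disjoint_sdiff
      exact Finset.union_sdiff_cancel_left hd
    · intro T hT
      simp only [Finset.mem_filter] at hT
      simp only [Finset.card_sdiff_of_subset hT.2.1]
      have hle : U.card ≤ T.card := Finset.card_le_card hT.2.1
      rw [← pow_add, show U.card + (T.card - U.card) = T.card by omega]
  · rw [Finset.sum_eq_zero]
    intro T hT
    simp only [Finset.mem_filter] at hT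
    exact absurd (hT.2.1.trans hT.2.2) hUA

/-- For `r ≥ 4` and `U ⊆ [r]` with `|U| < r − 2`, the vector `V` with
`V_T = (−1)^|T|` if `U ⊆ T` and `V_T = 0` otherwise lies in the kernel of `M_r`. -/
theorem familyD_kernel (r : ℕ) (hr : 4 ≤ r) (U : Finset (Fin r)) (hU : U.card < r - 2)
    (V : Finset (Fin r) → ℝ)
    (hV : ∀ T : Finset (Fin r), V T = if U ⊆ T then (-1 : ℝ) ^ T.card else 0) :
    (Mmat r).mulVec V = 0 := by
  funext S
  simp only [Matrix.mulVec, dotProduct, Pi.zero_apply, Mmat]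
  have h1 : ∀ T : Finset (Fin r),
      (((S ∩ T).card.choose 2 : ℝ) + ((Sᶜ ∩ Tᶜ).card.choose 2 : ℝ)) * V T
      = (if U ⊆ T then (((S ∩ T).card.choose 2 : ℝ) + ((Sᶜ ∩ Tᶜ).card.choose 2 : ℝ)) * (-1:ℝ)^T.card else 0) := by
    intro T
    rw [hV T]
    split <;> simp
  rw [Finset.sum_congr rfl (fun T _ => h1 T), ← Finset.sum_filter]
  rw [Finset.sum_congr rfl (fun T _ => add_mul _ _ _), Finset.sum_add_distrib]
  have key1 : ∑ T ∈ Finset.univ.filter (fun T => U ⊆ T),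
      ((S ∩ T).card.choose 2 : ℝ) * (-1:ℝ)^T.card = 0 := by
    have hc : ∀ T : Finset (Fin r), ((S ∩ T).card.choose 2 : ℝ)
        = ∑ P ∈ (S.powersetCard 2), (if P ⊆ T then (1:ℝ) else 0) := by
      intro T
      rw [← Finset.sum_filter, Finset.sum_const, nsmul_eq_mul, mul_one,
        ← Finset.card_powersetCard]
      congr 2
      ext P
      simp only [Finset.mem_powersetCard, Finset.mem_filter, Finset.subset_inter_iff]
      tauto
    rw [Finset.sum_congr rfl (fun T _ => by rw [hc T, Finset.sum_mul])]
    rw [Finset.sum_comm]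
    refine Finset.sum_eq_zero fun P hP => ?_
    simp only [Finset.mem_powersetCard] at hP
    have h2 : ∀ T : Finset (Fin r), (if P ⊆ T then (1:ℝ) else 0) * (-1:ℝ)^T.card
        = (if P ⊆ T then (-1:ℝ)^T.card else 0) := by intro T; split <;> simp
    rw [Finset.sum_congr rfl (fun T _ => h2 T), ← Finset.sum_filter, Finset.filter_filter]
    have : ∑ T ∈ Finset.univ.filter (fun T => U ⊆ T ∧ P ⊆ T), (-1:ℝ)^T.card
        = ∑ T ∈ Finset.univ.filter (fun T => (U ∪ P) ⊆ T ∧ T ⊆ Finset.univ), (-1:ℝ)^T.card := by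
      apply Finset.sum_congr _ (fun _ _ => rfl)
      ext T
      simp [Finset.union_subset_iff]
    rw [this, interval_sum_zero]
    rw [Finset.card_univ, Fintype.card_fin]
    have := Finset.card_union_le U P
    omega
  have key2 : ∑ T ∈ Finset.univ.filter (fun T => U ⊆ T),
      ((Sᶜ ∩ Tᶜ).card.choose 2 : ℝ) * (-1:ℝ)^T.card = 0 := by
    have hc : ∀ T : Finset (Fin r), ((Sᶜ ∩ Tᶜ).card.choose 2 : ℝ)
        = ∑ P ∈ (Sᶜ.powersetCard 2), (if T ⊆ Pᶜ then (1:ℝ) else 0) := by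
      intro T
      rw [← Finset.sum_filter, Finset.sum_const, nsmul_eq_mul, mul_one,
        ← Finset.card_powersetCard]
      congr 2
      ext P
      simp only [Finset.mem_powersetCard, Finset.mem_filter, Finset.subset_inter_iff,
        Finset.subset_compl_comm]
      tauto
    rw [Finset.sum_congr rfl (fun T _ => by rw [hc T, Finset.sum_mul])]
    rw [Finset.sum_comm]
    refine Finset.sum_eq_zero fun P hP => ?_
    simp only [Finset.mem_powersetCard] at hP
    have h2 : ∀ T : Finset (Fin r), (if T ⊆ Pᶜ then (1:ℝ) else 0) * (-1:ℝ)^T.card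
        = (if T ⊆ Pᶜ then (-1:ℝ)^T.card else 0) := by intro T; split <;> simp
    rw [Finset.sum_congr rfl (fun T _ => h2 T), ← Finset.sum_filter, Finset.filter_filter]
    rw [interval_sum_zero]
    rw [Finset.card_compl, Fintype.card_fin, hP.2]
    omega
  rw [key1, key2, add_zero]
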